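/- Let G: C^n → C^{n−l} be defined by G(z) = z_1^{d_1}···z_l^{d_l}·(z_{l+1}^{k−D},...,z_n^{k−D}) with d_1,...,d_l, k−D positive integers. For z with all coordinates nonzero, the vectors C_j(z) with entries (k−D)z_j in position j, −d_j z_{l+1},...,−d_j z_n in positions l+1,...,n, and 0 elsewhere, for j = 1,...,l, form a basis of the kernel of the Jacobian matrix G'(z) ∈ C^{(n−l)×n}. -/

import Mathlib

open Finset

/-- Derivative of a monomial `z ↦ ∏ w, z w ^ c w` at a point with nonzero coordinates. -/
lemma key_hasFDerivAt {N : ℕ} (c : Fin N → ℕ) (z : Fin N → ℂ) (hz : ∀ w, z w ≠ 0) :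
    HasFDerivAt (fun z : Fin N → ℂ => ∏ w, z w ^ c w)
      (∑ w, ((c w : ℂ) * (∏ w', z w' ^ c w') / z w) •
        (ContinuousLinearMap.proj w : (Fin N → ℂ) →L[ℂ] ℂ)) z := by
  have h := HasFDerivAt.finset_prod (𝕜 := ℂ) (u := Finset.univ)
    (g := fun w (z : Fin N → ℂ) => z w ^ c w)
    (g' := fun w => ((c w : ℂ) * z w ^ (c w - 1)) • ContinuousLinearMap.proj w)
    (x := z)
    (fun w _ => by
      exact
        (hasDerivAt_pow (c w) (z w)).comp_hasFDerivAt z (hasFDerivAt_apply w z))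
  refine h.congr_fderiv ?_
  refine Finset.sum_congr rfl fun w _ => ?_
  rw [smul_smul]
  congr 1
  rcases Nat.eq_zero_or_pos (c w) with h0 | h0
  · simp [h0]
  · have hprod : (∏ w', z w' ^ c w') =
        (∏ j ∈ Finset.univ.erase w, z j ^ c j) * (z w ^ (c w - 1) * z w) := by
      rw [← pow_succ, Nat.sub_add_cancel h0,
        Finset.prod_erase_mul Finset.univ _ (Finset.mem_univ w)]
    rw [hprod]
    rw [eq_div_iff (hz w)]
    ring

theorem stmt15 {l m : ℕ} (d : Fin l → ℕ) (hd : ∀ j, 0 < d j) (e : ℕ) (he : 0 < e)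
    (G : (Fin (l + m) → ℂ) → (Fin m → ℂ))
    (hGdef : ∀ z i, G z i = (∏ j, z (Fin.castAdd m j) ^ d j) * z (Fin.natAdd l i) ^ e)
    (z : Fin (l + m) → ℂ) (hz : ∀ i, z i ≠ 0)
    (Cvec : Fin l → Fin (l + m) → ℂ)
    (hC : ∀ j, Cvec j = fun i => Fin.addCases
      (fun j' : Fin l => if j' = j then (e : ℂ) * z (Fin.castAdd m j) else 0)
      (fun i' : Fin m => -(d j : ℂ) * z (Fin.natAdd l i')) i) :
    LinearIndependent ℂ Cvec ∧
    Submodule.span ℂ (Set.range Cvec) = LinearMap.ker (fderiv ℂ G z).toLinearMap := by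
  classical
  have hzc : ∀ j : Fin l, z (Fin.castAdd m j) ≠ 0 := fun j => hz _
  have hzn : ∀ i : Fin m, z (Fin.natAdd l i) ≠ 0 := fun i => hz _
  have hCl : ∀ j j' : Fin l, Cvec j (Fin.castAdd m j') =
      if j' = j then (e : ℂ) * z (Fin.castAdd m j) else 0 := by
    intro j j'; rw [hC]; exact Fin.addCases_left j'
  have hCr : ∀ (j : Fin l) (i : Fin m), Cvec j (Fin.natAdd l i) =
      -(d j : ℂ) * z (Fin.natAdd l i) := by
    intro j i; rw [hC]; exact Fin.addCases_right i
  -- exponent vector for component i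
  set c : Fin m → Fin (l + m) → ℕ :=
    fun i => Fin.addCases d (fun i' => if i' = i then e else 0) with hc
  have hcfun : ∀ (w : Fin (l+m) → ℂ) i, G w i = ∏ v, w v ^ c i v := by
    intro w i
    rw [hGdef, hc, Fin.prod_univ_add]
    simp only [Fin.addCases_left, Fin.addCases_right]
    congr 1
    have : ∏ x : Fin m, w (Fin.natAdd l x) ^ (if x = i then e else 0) =
        w (Fin.natAdd l i) ^ e := by
      rw [Finset.prod_eq_single i]
      · simp
      · intro b _ hb; simp [hb]
      · simp
    exact this.symm
  have hG : G = fun w i => ∏ v, w v ^ c i v := funext fun w => funext fun i => hcfun w i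
  -- derivative
  set P : Fin m → ℂ := fun i => ∏ v, z v ^ c i v with hP
  have hPne : ∀ i, P i ≠ 0 :=
    fun i => Finset.prod_ne_zero_iff.2 fun v _ => pow_ne_zero _ (hz v)
  set L : Fin m → (Fin (l + m) → ℂ) →L[ℂ] ℂ :=
    fun i => ∑ w, ((c i w : ℂ) * P i / z w) •
        (ContinuousLinearMap.proj w : (Fin (l + m) → ℂ) →L[ℂ] ℂ) with hL
  have hDG : HasFDerivAt G (ContinuousLinearMap.pi L) z := by
    rw [hG]; exact hasFDerivAt_pi.2 fun i => key_hasFDerivAt (c i) z hz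
  have hfd : fderiv ℂ G z = ContinuousLinearMap.pi L := hDG.fderiv
  have hLapp : ∀ i v, L i v = P i *
      ((∑ j, (d j : ℂ) * v (Fin.castAdd m j) / z (Fin.castAdd m j)) +
        (e : ℂ) * v (Fin.natAdd l i) / z (Fin.natAdd l i)) := by
    intro i v
    rw [hL]
    simp only [ContinuousLinearMap.coe_sum', Finset.sum_apply,
      ContinuousLinearMap.coe_smul', Pi.smul_apply, ContinuousLinearMap.proj_apply,
      smul_eq_mul]
    rw [Fin.sum_univ_add]
    simp only [hc, Fin.addCases_left, Fin.addCases_right]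
    rw [mul_add, Finset.mul_sum]
    congr 1
    · refine Finset.sum_congr rfl fun j _ => ?_
      have h1 := hzc j
      field_simp
    · rw [Finset.sum_eq_single i (fun b _ hb => by simp [hb]) (by simp)]
      simp only [if_pos rfl, eq_self_iff_true, ite_true]
      have h1 := hzn i
      field_simp
  -- kernel characterization
  have hker : ∀ v : Fin (l + m) → ℂ,
      v ∈ LinearMap.ker (fderiv ℂ G z).toLinearMap ↔
      ∀ i, ((∑ j, (d j : ℂ) * v (Fin.castAdd m j) / z (Fin.castAdd m j)) +
        (e : ℂ) * v (Fin.natAdd l i) / z (Fin.natAdd l i)) = 0 := by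
    intro v
    rw [hfd, LinearMap.mem_ker]
    constructor
    · intro h i
      have h1 : L i v = 0 := congrFun h i
      rw [hLapp] at h1
      exact (mul_eq_zero.1 h1).resolve_left (hPne i)
    · intro h
      funext i
      show L i v = 0
      rw [hLapp, h i, mul_zero]
  constructor
  · -- linear independence
    rw [Fintype.linearIndependent_iff]
    intro g hg j0
    have h1 : ∑ j, g j * Cvec j (Fin.castAdd m j0) = 0 := by
      have := congrFun hg (Fin.castAdd m j0)
      simpa using this
    rw [Finset.sum_eq_single j0 (fun b _ hb => by rw [hCl, if_neg (Ne.symm hb), mul_zero])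
      (by simp)] at h1
    rw [hCl, if_pos rfl] at h1
    have hne : (e : ℂ) * z (Fin.castAdd m j0) ≠ 0 :=
      mul_ne_zero (Nat.cast_ne_zero.2 he.ne') (hzc j0)
    exact (mul_eq_zero.1 h1).resolve_right hne
  · -- span = ker
    apply le_antisymm
    · rw [Submodule.span_le]
      rintro _ ⟨j, rfl⟩
      rw [SetLike.mem_coe, hker]
      intro i
      rw [Finset.sum_eq_single j (fun b _ hb => by rw [hCl, if_neg hb]; simp) (by simp)]
      rw [hCl, if_pos rfl, hCr]
      have h1 := hzc j
      have h2 := hzn i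
      field_simp
      ring
    · intro v hv
      rw [hker] at hv
      set a : Fin l → ℂ := fun j => v (Fin.castAdd m j) / ((e : ℂ) * z (Fin.castAdd m j))
        with ha
      have hv2 : v = ∑ j, a j • Cvec j := by
        funext w
        have hw : (∑ j, a j • Cvec j) w = ∑ j, a j * Cvec j w := by
          simp [Finset.sum_apply]
        rw [hw]
        induction w using Fin.addCases with
        | left j0 =>
          rw [Finset.sum_eq_single j0
            (fun b _ hb => by rw [hCl, if_neg (Ne.symm hb), mul_zero]) (by simp)]
          rw [hCl, if_pos rfl, ha]
          exact (div_mul_cancel₀ _ (mul_ne_zero (Nat.cast_ne_zero.2 he.ne') (hzc j0))).symm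
        | right i =>
          have h1 := hv i
          have h2 : v (Fin.natAdd l i) =
              -(∑ j, (d j : ℂ) * v (Fin.castAdd m j) / z (Fin.castAdd m j)) *
                z (Fin.natAdd l i) / e := by
            have hE : (e : ℂ) ≠ 0 := Nat.cast_ne_zero.2 he.ne'
            rw [add_comm, add_eq_zero_iff_eq_neg, div_eq_iff (hzn i)] at h1
            rw [eq_div_iff hE]
            linear_combination h1
          rw [h2]
          have h3 : ∀ j : Fin l, a j * Cvec j (Fin.natAdd l i) =
              (d j : ℂ) * v (Fin.castAdd m j) / z (Fin.castAdd m j) *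
                (-(z (Fin.natAdd l i)) / e) := by
            intro j
            rw [hCr, ha]
            have hE : (e : ℂ) ≠ 0 := Nat.cast_ne_zero.2 he.ne'
            have h4 := hzc j
            field_simp
          rw [Finset.sum_congr rfl fun j _ => h3 j, ← Finset.sum_mul]
          ring
      rw [hv2]
      exact Submodule.sum_mem _ fun j _ =>
        Submodule.smul_mem _ _ (Submodule.subset_span (Set.mem_range_self j))
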